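/- Let k ≥ 2 and let Q(ε) = (1+ε)^{k+1} − (1−ε)^{1−k} − 2ε − ε²(1−ε)^{k−1} for ε ∈ [0,1). Then there is exactly one ε_k ∈ (0,1) with Q(ε_k) = 0. -/

import Mathlib

open Finset

/-- Tail (polynomial-part) coefficients. -/
noncomputable def qco (m n : ℕ) : ℝ :=
  (if n = 1 then 2 else 0) + (if n = 2 then (m + 1 : ℝ) else 0)
    + (if n = 3 then (m + 1 : ℝ) else 0)
    - ((m + 3).choose n : ℝ)
    + (if 2 ≤ n then (-1 : ℝ) ^ n * ((m + 1).choose (n - 2) : ℝ) else 0)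

noncomputable def bco (m n : ℕ) : ℝ := ((n + m).choose m : ℝ) + qco m n

noncomputable def Gf (m : ℕ) (x : ℝ) : ℝ :=
  1 / (1 - x) ^ (m + 1)
    + ((m + 1 : ℝ) * x ^ 2 + (m + 1 : ℝ) * x ^ 3 - (1 + x) ^ (m + 3) + 2 * x
        + x ^ 2 * (1 - x) ^ (m + 1))

lemma hasSum_binom (N : ℕ) (x : ℝ) :
    HasSum (fun n => ((N.choose n : ℝ)) * x ^ n) ((1 + x) ^ N) := by
  have h : ∀ n ∉ Finset.range (N + 1), ((N.choose n : ℝ)) * x ^ n = 0 := by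
    intro n hn
    rw [Nat.choose_eq_zero_of_lt (by simpa using hn)]
    simp
  have H : HasSum _ _ := hasSum_sum_of_ne_finset_zero (s := Finset.range (N + 1)) h
  have : ∑ n ∈ Finset.range (N + 1), ((N.choose n : ℝ)) * x ^ n = (1 + x) ^ N := by
    rw [add_comm 1 x, add_pow]
    exact Finset.sum_congr rfl fun n _ => by ring
  rwa [this] at H

lemma hasSum_tail (m : ℕ) (x : ℝ) :
    HasSum (fun n => (if 2 ≤ n then (-1 : ℝ) ^ n * ((m + 1).choose (n - 2) : ℝ) else 0) * x ^ n)
      (x ^ 2 * (1 - x) ^ (m + 1)) := by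
  have h : ∀ n ∉ Finset.range (m + 4),
      (if 2 ≤ n then (-1 : ℝ) ^ n * ((m + 1).choose (n - 2) : ℝ) else 0) * x ^ n = 0 := by
    intro n hn
    simp only [Finset.mem_range, not_lt] at hn
    rw [if_pos (by omega), Nat.choose_eq_zero_of_lt (by omega)]
    simp
  have H : HasSum _ _ := hasSum_sum_of_ne_finset_zero (s := Finset.range (m + 4)) h
  have key : ∑ n ∈ Finset.range (m + 4),
      (if 2 ≤ n then (-1 : ℝ) ^ n * ((m + 1).choose (n - 2) : ℝ) else 0) * x ^ n
      = x ^ 2 * (1 - x) ^ (m + 1) := by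
    rw [Finset.range_eq_Ico,
      ← Finset.sum_Ico_consecutive _ (by omega : (0:ℕ) ≤ 2) (by omega : (2:ℕ) ≤ m + 4)]
    have h0 : ∑ n ∈ Finset.Ico 0 2,
        (if 2 ≤ n then (-1 : ℝ) ^ n * ((m + 1).choose (n - 2) : ℝ) else 0) * x ^ n = 0 := by
      rw [show Finset.Ico 0 2 = {0, 1} from rfl]
      norm_num
    have h1 : ∑ n ∈ Finset.Ico 2 (m + 4),
        (if 2 ≤ n then (-1 : ℝ) ^ n * ((m + 1).choose (n - 2) : ℝ) else 0) * x ^ n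
        = x ^ 2 * (1 - x) ^ (m + 1) := by
      rw [Finset.sum_Ico_eq_sum_range, show m + 4 - 2 = m + 2 by omega]
      have : ∀ i ∈ Finset.range (m + 2),
          (if 2 ≤ 2 + i then (-1 : ℝ) ^ (2 + i) * ((m + 1).choose (2 + i - 2) : ℝ) else 0)
            * x ^ (2 + i)
          = x ^ 2 * ((-x) ^ i * 1 ^ (m + 1 - i) * ((m + 1).choose i : ℝ)) := by
        intro i _
        rw [if_pos (by omega), show 2 + i - 2 = i by omega]
        ring
      rw [Finset.sum_congr rfl this, ← Finset.mul_sum]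
      congr 1
      rw [show (1 : ℝ) - x = -x + 1 by ring, add_pow]
    rw [h0, h1, zero_add]
  rwa [key] at H

lemma hasSum_q (m : ℕ) (x : ℝ) :
    HasSum (fun n => qco m n * x ^ n)
      ((m + 1 : ℝ) * x ^ 2 + (m + 1 : ℝ) * x ^ 3 - (1 + x) ^ (m + 3) + 2 * x
        + x ^ 2 * (1 - x) ^ (m + 1)) := by
  have h1 : HasSum (fun n => (if n = 1 then (2 : ℝ) else 0) * x ^ n) (2 * x) := by
    have H := hasSum_ite_eq (1 : ℕ) (2 * x ^ 1)
    have : (fun n : ℕ => (if n = 1 then (2 : ℝ) else 0) * x ^ n)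
        = fun n : ℕ => if n = 1 then 2 * x ^ 1 else 0 := by
      funext n; split_ifs with h <;> simp [h]
    rw [this]
    simpa using H
  have h2 : HasSum (fun n => (if n = 2 then (m + 1 : ℝ) else 0) * x ^ n) ((m + 1 : ℝ) * x ^ 2) := by
    have H := hasSum_ite_eq (2 : ℕ) ((m + 1 : ℝ) * x ^ 2)
    have : (fun n : ℕ => (if n = 2 then (m + 1 : ℝ) else 0) * x ^ n)
        = fun n : ℕ => if n = 2 then (m + 1 : ℝ) * x ^ 2 else 0 := by
      funext n; split_ifs with h <;> simp [h]
    rw [this]; exact H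
  have h3 : HasSum (fun n => (if n = 3 then (m + 1 : ℝ) else 0) * x ^ n) ((m + 1 : ℝ) * x ^ 3) := by
    have H := hasSum_ite_eq (3 : ℕ) ((m + 1 : ℝ) * x ^ 3)
    have : (fun n : ℕ => (if n = 3 then (m + 1 : ℝ) else 0) * x ^ n)
        = fun n : ℕ => if n = 3 then (m + 1 : ℝ) * x ^ 3 else 0 := by
      funext n; split_ifs with h <;> simp [h]
    rw [this]; exact H
  have h4 := hasSum_binom (m + 3) x
  have h5 := hasSum_tail m x
  have H := (((h1.add h2).add h3).sub h4).add h5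
  have hfun : (fun n => ((if n = 1 then (2 : ℝ) else 0) * x ^ n
        + (if n = 2 then (m + 1 : ℝ) else 0) * x ^ n
        + (if n = 3 then (m + 1 : ℝ) else 0) * x ^ n
        - ((m + 3).choose n : ℝ) * x ^ n)
        + (if 2 ≤ n then (-1 : ℝ) ^ n * ((m + 1).choose (n - 2) : ℝ) else 0) * x ^ n)
      = fun n => qco m n * x ^ n := by
    funext n; simp only [qco]; ring
  rw [hfun] at H
  convert H using 1
  · rfl
  ring

lemma hasSum_b (m : ℕ) {x : ℝ} (h0 : 0 ≤ x) (h1 : x < 1) :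
    HasSum (fun n => bco m n * x ^ n) (Gf m x) := by
  have hc : HasSum (fun n => (((n + m).choose m : ℕ) : ℝ) * x ^ n) (1 / (1 - x) ^ (m + 1)) :=
    hasSum_choose_mul_geometric_of_norm_lt_one m
      (by rw [Real.norm_eq_abs, abs_of_nonneg h0]; exact h1)
  have H := hc.add (hasSum_q m x)
  have hfun : (fun n => (((n + m).choose m : ℕ) : ℝ) * x ^ n + qco m n * x ^ n)
      = fun n => bco m n * x ^ n := by
    funext n; simp only [bco]; ring
  rwa [hfun] at H

lemma choose_sym_add (n m : ℕ) : (n + m).choose m = (n + m).choose n := by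
  have := Nat.choose_symm (n := n + m) (k := n) (by omega)
  rwa [show n + m - n = m by omega] at this

lemma bco_eq_zero (m : ℕ) {n : ℕ} (hn : n ≤ 3) : bco m n = 0 := by
  interval_cases n
  · simp [bco, qco]
  · have e1 : (1 + m).choose m = m + 1 := by
      rw [choose_sym_add, Nat.choose_one_right]; omega
    simp [bco, qco, e1, Nat.choose_one_right]
    push_cast; ring
  · have e1 : (2 + m).choose m = (m + 2).choose 2 := by
      rw [choose_sym_add]; congr 1; omega
    have e2 : (m + 3).choose 2 = (m + 2).choose 1 + (m + 2).choose 2 :=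
      Nat.choose_succ_succ' (m + 2) 1
    simp [bco, qco, e1, e2, Nat.choose_one_right]
    push_cast; ring
  · have e1 : (3 + m).choose m = (m + 3).choose 3 := by
      rw [choose_sym_add]; congr 1; omega
    simp [bco, qco, e1, Nat.choose_one_right]
    push_cast; ring

lemma bco_nonneg (m : ℕ) {n : ℕ} (hn : 4 ≤ n) : 0 ≤ bco m n := by
  have hnat : (m + 3).choose n + (m + 1).choose (n - 2) ≤ (n + m).choose m := by
    rw [choose_sym_add]
    have h2 : (m + 4).choose n ≤ (n + m).choose n := Nat.choose_le_choose n (by omega)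
    have h3 : (m + 4).choose n = (m + 3).choose (n - 1) + (m + 3).choose n := by
      obtain ⟨j, rfl⟩ : ∃ j, n = j + 1 := ⟨n - 1, by omega⟩
      simpa using Nat.choose_succ_succ' (m + 3) j
    have h4 : (m + 1).choose (n - 2) ≤ (m + 3).choose (n - 1) := by
      obtain ⟨j, rfl⟩ : ∃ j, n = j + 2 := ⟨n - 2, by omega⟩
      have p1 : (m + 1).choose j ≤ (m + 2).choose j := Nat.choose_le_choose j (by omega)
      have p2 : (m + 3).choose (j + 1) = (m + 2).choose j + (m + 2).choose (j + 1) :=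
        Nat.choose_succ_succ' (m + 2) j
      have : j + 2 - 2 = j := by omega
      have h2' : j + 2 - 1 = j + 1 := by omega
      rw [this, h2', p2]
      omega
    omega
  have habs : -(((m + 1).choose (n - 2) : ℝ)) ≤ (-1 : ℝ) ^ n * ((m + 1).choose (n - 2) : ℝ) := by
    rcases neg_one_pow_eq_or ℝ n with h | h <;> rw [h]
    · have : (0 : ℝ) ≤ ((m + 1).choose (n - 2) : ℝ) := Nat.cast_nonneg _
      linarith
    · linarith
  have hcast : ((m + 3).choose n : ℝ) + ((m + 1).choose (n - 2) : ℝ) ≤ ((n + m).choose m : ℝ) := by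
    exact_mod_cast hnat
  simp only [bco, qco]
  rw [if_neg (by omega), if_neg (by omega), if_neg (by omega), if_pos (by omega)]
  linarith

lemma Gf_nonneg (m : ℕ) {x : ℝ} (h0 : 0 ≤ x) (h1 : x < 1) : 0 ≤ Gf m x := by
  refine hasSum_le (f := fun _ : ℕ => (0 : ℝ)) (fun n => ?_) hasSum_zero (hasSum_b m h0 h1)
  rcases le_or_gt n 3 with h | h
  · simp [bco_eq_zero m h]
  · have := bco_nonneg m (by omega : 4 ≤ n)
    positivity

lemma Gf_mono (m : ℕ) {x y : ℝ} (hx : 0 ≤ x) (hxy : x ≤ y) (hy : y < 1) :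
    Gf m x * y ^ 4 ≤ Gf m y * x ^ 4 := by
  have hx1 : x < 1 := lt_of_le_of_lt hxy hy
  have hy0 : 0 ≤ y := hx.trans hxy
  have H1 := (hasSum_b m hx hx1).mul_right (y ^ 4)
  have H2 := (hasSum_b m hy0 hy).mul_right (x ^ 4)
  refine hasSum_le (fun n => ?_) H1 H2
  rcases le_or_gt n 3 with h | h
  · simp [bco_eq_zero m h]
  · have hb := bco_nonneg m (by omega : 4 ≤ n)
    obtain ⟨j, rfl⟩ : ∃ j, n = 4 + j := ⟨n - 4, by omega⟩
    have hxj : x ^ j ≤ y ^ j := pow_le_pow_left₀ hx hxy j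
    have key : x ^ (4 + j) * y ^ 4 ≤ y ^ (4 + j) * x ^ 4 := by
      rw [pow_add, pow_add]
      calc x ^ 4 * x ^ j * y ^ 4 = (x ^ 4 * y ^ 4) * x ^ j := by ring
        _ ≤ (x ^ 4 * y ^ 4) * y ^ j := by
            apply mul_le_mul_of_nonneg_left hxj (by positivity)
        _ = y ^ 4 * y ^ j * x ^ 4 := by ring
    calc bco m (4 + j) * x ^ (4 + j) * y ^ 4 = bco m (4 + j) * (x ^ (4 + j) * y ^ 4) := by ring
      _ ≤ bco m (4 + j) * (y ^ (4 + j) * x ^ 4) := mul_le_mul_of_nonneg_left key hb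
      _ = bco m (4 + j) * y ^ (4 + j) * x ^ 4 := by ring

lemma Q_eq (m : ℕ) (x : ℝ) :
    (1 + x) ^ (m + 3) - ((1 - x) ^ (m + 1))⁻¹ - 2 * x - x ^ 2 * (1 - x) ^ (m + 1)
      = (m + 1 : ℝ) * x ^ 2 * (1 + x) - Gf m x := by
  simp only [Gf, one_div]
  ring

theorem stmt_10 (k : ℕ) (hk : 2 ≤ k) :
    ∃! ε : ℝ, ε ∈ Set.Ioo (0 : ℝ) 1 ∧
      (1 + ε) ^ (k + 1) - ((1 - ε) ^ (k - 1))⁻¹ - 2 * ε - ε ^ 2 * (1 - ε) ^ (k - 1) = 0 := by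
  obtain ⟨m, rfl⟩ : ∃ m, k = m + 2 := ⟨k - 2, by omega⟩
  have hexp1 : m + 2 + 1 = m + 3 := rfl
  have hexp2 : m + 2 - 1 = m + 1 := rfl
  simp only [hexp1, hexp2]
  -- uniqueness helper
  have uniq : ∀ x y : ℝ, x ∈ Set.Ioo (0 : ℝ) 1 → y ∈ Set.Ioo (0 : ℝ) 1 →
      (1 + x) ^ (m + 3) - ((1 - x) ^ (m + 1))⁻¹ - 2 * x - x ^ 2 * (1 - x) ^ (m + 1) = 0 →
      (1 + y) ^ (m + 3) - ((1 - y) ^ (m + 1))⁻¹ - 2 * y - y ^ 2 * (1 - y) ^ (m + 1) = 0 →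
      x < y → False := by
    intro x y hx hy hqx hqy hlt
    rw [Q_eq] at hqx hqy
    have hGx : (m + 1 : ℝ) * x ^ 2 * (1 + x) = Gf m x := by linarith
    have hGy : (m + 1 : ℝ) * y ^ 2 * (1 + y) = Gf m y := by linarith
    have hkey := Gf_mono m hx.1.le hlt.le hy.2
    rw [← hGx, ← hGy] at hkey
    have p1 : 0 < x * y := mul_pos hx.1 hy.1
    have p2 : 0 < y - x := sub_pos.2 hlt
    have hm : (0 : ℝ) ≤ (m : ℝ) := Nat.cast_nonneg m
    nlinarith [mul_pos (mul_pos (mul_pos p1 p1) p2) (add_pos hx.1 hy.1),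
      mul_pos (mul_pos (mul_pos p1 p1) p1) p2, hkey, hm]
  -- positive point
  obtain ⟨C, hC⟩ : ∃ C : ℝ, C = 16 * Gf m (1 / 2) := ⟨_, rfl⟩
  have hGhalf : 0 ≤ Gf m (1 / 2) := Gf_nonneg m (by norm_num) (by norm_num)
  have hC0 : 0 ≤ C := by rw [hC]; positivity
  obtain ⟨a, ha⟩ : ∃ a : ℝ, a = min (1 / 2) (Real.sqrt (((m : ℝ) + 1) / (C + 1))) := ⟨_, rfl⟩
  have ha0 : 0 < a := by
    rw [ha]; exact lt_min (by norm_num) (Real.sqrt_pos.2 (by positivity))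
  have ha2 : a ≤ 1 / 2 := by rw [ha]; exact min_le_left _ _
  have hasq : a ^ 2 * (C + 1) ≤ (m : ℝ) + 1 := by
    have h1 : a ≤ Real.sqrt (((m : ℝ) + 1) / (C + 1)) := by
      rw [ha]; exact min_le_right _ _
    have hnn : (0 : ℝ) ≤ ((m : ℝ) + 1) / (C + 1) := by positivity
    have h2 : a ^ 2 ≤ ((m : ℝ) + 1) / (C + 1) := by
      have hs := Real.sq_sqrt hnn
      nlinarith [h1, ha0.le, Real.sqrt_nonneg (((m : ℝ) + 1) / (C + 1))]
    rw [le_div_iff₀ (by positivity)] at h2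
    linarith
  have hQa : 0 < (1 + a) ^ (m + 3) - ((1 - a) ^ (m + 1))⁻¹ - 2 * a - a ^ 2 * (1 - a) ^ (m + 1) := by
    rw [Q_eq]
    have hGa : Gf m a ≤ C * a ^ 4 := by
      have h := Gf_mono m ha0.le ha2 (by norm_num : (1 : ℝ) / 2 < 1)
      rw [hC]
      nlinarith [h]
    have h5 : a ^ 2 * (a ^ 2 * (C + 1)) ≤ a ^ 2 * ((m : ℝ) + 1) :=
      mul_le_mul_of_nonneg_left hasq (sq_nonneg a)
    have h6 : 0 < ((m : ℝ) + 1) * a ^ 3 := by positivity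
    have h7 : 0 < a ^ 4 := by positivity
    nlinarith [hGa, h5, h6, h7]
  -- negative point
  obtain ⟨e1, he1⟩ : ∃ e1 : ℝ, e1 = 1 - (1 / 2 : ℝ) ^ (m + 3) := ⟨_, rfl⟩
  have hp0 : (0 : ℝ) < (1 / 2 : ℝ) ^ (m + 3) := by positivity
  have hp1 : ((1 : ℝ) / 2) ^ (m + 3) ≤ 1 / 2 := by
    calc ((1 : ℝ) / 2) ^ (m + 3) ≤ (1 / 2 : ℝ) ^ 1 :=
          pow_le_pow_of_le_one (by norm_num) (by norm_num) (by omega)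
      _ = 1 / 2 := pow_one _
  have he1_lt1 : e1 < 1 := by rw [he1]; linarith
  have he1_ge : 1 / 2 ≤ e1 := by rw [he1]; linarith
  have hQe1 : (1 + e1) ^ (m + 3) - ((1 - e1) ^ (m + 1))⁻¹ - 2 * e1
      - e1 ^ 2 * (1 - e1) ^ (m + 1) < 0 := by
    have h1 : 1 - e1 = (1 / 2 : ℝ) ^ (m + 3) := by rw [he1]; ring
    have h2 : ((1 - e1) ^ (m + 1))⁻¹ = 2 ^ ((m + 3) * (m + 1)) := by
      rw [h1, ← pow_mul, show (1 / 2 : ℝ) = 2⁻¹ by norm_num, inv_pow, inv_inv]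
    have h3 : (1 + e1) ^ (m + 3) < 2 ^ (m + 3) := by
      apply pow_lt_pow_left₀ (by linarith) (by linarith)
      omega
    have h4 : (2 : ℝ) ^ (m + 3) ≤ 2 ^ ((m + 3) * (m + 1)) := by
      apply pow_le_pow_right₀ (by norm_num)
      nlinarith [m.zero_le]
    have h5 : 0 ≤ e1 ^ 2 * (1 - e1) ^ (m + 1) := by
      rw [h1]; positivity
    rw [h2]
    have : 0 < e1 := by linarith
    linarith
  -- IVT
  have hab : a ≤ e1 := le_trans ha2 he1_ge
  have hcont : ContinuousOn
      (fun x : ℝ => (1 + x) ^ (m + 3) - ((1 - x) ^ (m + 1))⁻¹ - 2 * x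
        - x ^ 2 * (1 - x) ^ (m + 1)) (Set.Icc a e1) := by
    have hne : ∀ x ∈ Set.Icc a e1, (1 - x) ^ (m + 1) ≠ 0 := by
      intro x hx
      have hx1 : x < 1 := lt_of_le_of_lt hx.2 he1_lt1
      exact pow_ne_zero _ (by intro h; nlinarith [sub_eq_zero.1 h])
    have c1 : Continuous fun x : ℝ => (1 + x) ^ (m + 3) := by fun_prop
    have c2 : Continuous fun x : ℝ => (1 - x) ^ (m + 1) := by fun_prop
    have c3 : Continuous fun x : ℝ => 2 * x := by fun_prop
    have c4 : Continuous fun x : ℝ => x ^ 2 * (1 - x) ^ (m + 1) := by fun_prop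
    exact ((c1.continuousOn.sub (c2.continuousOn.inv₀ hne)).sub c3.continuousOn).sub
      c4.continuousOn
  obtain ⟨c, hcmem, hcval⟩ := intermediate_value_Icc' hab hcont ⟨hQe1.le, hQa.le⟩
  have hcIoo : c ∈ Set.Ioo (0 : ℝ) 1 :=
    ⟨lt_of_lt_of_le ha0 hcmem.1, lt_of_le_of_lt hcmem.2 he1_lt1⟩
  refine ⟨c, ⟨hcIoo, hcval⟩, ?_⟩
  intro y hy
  rcases lt_trichotomy y c with h | h | h
  · exact absurd h (fun h => uniq y c hy.1 hcIoo hy.2 hcval h)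
  · exact h
  · exact absurd h (fun h => uniq c y hcIoo hy.1 hcval hy.2 h)
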